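/- Let n ≥ 3 be an integer and define a sequence (d_k) of natural numbers by d_0 = 1, d_1 = n, and d_{k+1} = n·d_k − d_{k−1} for k ≥ 1. Then in the ring of formal power series ℝ⟦X⟧ one has the identity (1 − (n²−2)X + X²)·(1 − X) · ∑_{k≥0} d_k² X^k = 1 + X. -/

import Mathlib

open PowerSeries

lemma key_aux (n : ℕ) (d : ℕ → ℕ)
    (hrec : ∀ k : ℕ, 1 ≤ k → d (k + 1) + d (k - 1) = n * d k) (m : ℕ) :
    ((d (m+3) : ℝ))^2 - ((d m : ℝ))^2
      = ((n : ℝ)^2 - 1) * (((d (m+2) : ℝ))^2 - ((d (m+1) : ℝ))^2) := by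
  have h1 := hrec (m+2) (by omega)
  have h2 := hrec (m+1) (by omega)
  simp only [Nat.add_sub_cancel] at h1 h2
  have H1 : (d (m+3) : ℝ) = n * d (m+2) - d (m+1) := by
    have := congrArg (Nat.cast : ℕ → ℝ) h1; push_cast at this; linarith
  have H2 : (d m : ℝ) = n * d (m+1) - d (m+2) := by
    have := congrArg (Nat.cast : ℕ → ℝ) h2; push_cast at this; linarith
  rw [H1, H2]; ring

/-- The sphere-volume series of `A_o(n)`:
`S(z) = ∑ d_k² z^k = (1+z)/((1-(n²-2)z+z²)(1-z))` where `d_k = dim u_k`. -/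
theorem stmt_7 (n : ℕ) (hn : 3 ≤ n) (d : ℕ → ℕ)
    (h0 : d 0 = 1) (h1 : d 1 = n)
    (hrec : ∀ k : ℕ, 1 ≤ k → d (k + 1) + d (k - 1) = n * d k) :
    (1 - PowerSeries.C ((n : ℝ) ^ 2 - 2) * PowerSeries.X + PowerSeries.X ^ 2) *
        (1 - PowerSeries.X) * PowerSeries.mk (fun k => ((d k : ℝ)) ^ 2)
      = 1 + PowerSeries.X := by
  set a : ℝ := (n : ℝ)^2 - 2 with ha
  set S : PowerSeries ℝ := PowerSeries.mk (fun k => ((d k : ℝ)) ^ 2) with hS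
  have expand : (1 - PowerSeries.C a * PowerSeries.X + PowerSeries.X ^ 2) *
      (1 - PowerSeries.X) * S
      = S - PowerSeries.C a * (S * PowerSeries.X ^ 1) - S * PowerSeries.X ^ 1
        + PowerSeries.C a * (S * PowerSeries.X ^ 2) + S * PowerSeries.X ^ 2
        - S * PowerSeries.X ^ 3 := by
    ring
  rw [expand]
  ext k
  simp only [map_sub, map_add, coeff_C_mul, PowerSeries.coeff_mul_X_pow',
    hS, PowerSeries.coeff_mk, PowerSeries.coeff_one, PowerSeries.coeff_X]
  match k with
  | 0 => norm_num [h0]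
  | 1 =>
    norm_num [h0, h1]
    push_cast
    ring
  | 2 =>
    have h2 := hrec 1 (by omega)
    simp only [h0, h1] at h2
    have hd2 : (d 2 : ℝ) = (n : ℝ)^2 - 1 := by
      have := congrArg (Nat.cast : ℕ → ℝ) h2; push_cast at this; linarith
    norm_num [h0, h1, hd2]
    push_cast
    ring
  | (m+3) =>
    have key := key_aux n d hrec m
    rw [if_pos (by omega : (1:ℕ) ≤ m + 3), if_pos (by omega : (2:ℕ) ≤ m + 3),
      if_pos (by omega : (3:ℕ) ≤ m + 3), if_neg (by omega : ¬ m + 3 = 0),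
      if_neg (by omega : ¬ m + 3 = 1)]
    have e1 : m + 3 - 1 = m + 2 := by omega
    have e2 : m + 3 - 2 = m + 1 := by omega
    have e3 : m + 3 - 3 = m := by omega
    rw [e1, e2, e3]
    have hb : a = (n:ℝ)^2 - 2 := ha
    nlinarith [key]
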